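/- The center of the subgroup Γ = ⟨σ1, σ2⟩ of GL(4,ℝ) is the cyclic subgroup generated by σ1⁴ = −I, and hence has order 2. -/

import Mathlib

open Matrix

/-- The general linear group of `4 × 4` real matrices. -/
abbrev GL4 := GL (Fin 4) ℝ

/-- rho0 : the reflection `ρ0 = diag(−1,1,1,1)`. -/
def rho0 : GL4 :=
  ⟨!![-1,0,0,0; 0,1,0,0; 0,0,1,0; 0,0,0,1],
   !![-1,0,0,0; 0,1,0,0; 0,0,1,0; 0,0,0,1],
   by ext i j; fin_cases i <;> fin_cases j <;>
      simp [Matrix.mul_apply, Fin.sum_univ_four, Matrix.one_apply, Matrix.vecHead, Matrix.vecTail],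
   by ext i j; fin_cases i <;> fin_cases j <;>
      simp [Matrix.mul_apply, Fin.sum_univ_four, Matrix.one_apply, Matrix.vecHead, Matrix.vecTail]⟩

/-- rho1 : the permutation matrix transposing coordinates 1 and 2. -/
def rho1 : GL4 :=
  ⟨!![0,1,0,0; 1,0,0,0; 0,0,1,0; 0,0,0,1],
   !![0,1,0,0; 1,0,0,0; 0,0,1,0; 0,0,0,1],
   by ext i j; fin_cases i <;> fin_cases j <;>
      simp [Matrix.mul_apply, Fin.sum_univ_four, Matrix.one_apply, Matrix.vecHead, Matrix.vecTail],
   by ext i j; fin_cases i <;> fin_cases j <;>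
      simp [Matrix.mul_apply, Fin.sum_univ_four, Matrix.one_apply, Matrix.vecHead, Matrix.vecTail]⟩

/-- rho2 : the permutation matrix transposing coordinates 2 and 3. -/
def rho2 : GL4 :=
  ⟨!![1,0,0,0; 0,0,1,0; 0,1,0,0; 0,0,0,1],
   !![1,0,0,0; 0,0,1,0; 0,1,0,0; 0,0,0,1],
   by ext i j; fin_cases i <;> fin_cases j <;>
      simp [Matrix.mul_apply, Fin.sum_univ_four, Matrix.one_apply, Matrix.vecHead, Matrix.vecTail],
   by ext i j; fin_cases i <;> fin_cases j <;>
      simp [Matrix.mul_apply, Fin.sum_univ_four, Matrix.one_apply, Matrix.vecHead, Matrix.vecTail]⟩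

/-- rho3 : the permutation matrix transposing coordinates 3 and 4. -/
def rho3 : GL4 :=
  ⟨!![1,0,0,0; 0,1,0,0; 0,0,0,1; 0,0,1,0],
   !![1,0,0,0; 0,1,0,0; 0,0,0,1; 0,0,1,0],
   by ext i j; fin_cases i <;> fin_cases j <;>
      simp [Matrix.mul_apply, Fin.sum_univ_four, Matrix.one_apply, Matrix.vecHead, Matrix.vecTail],
   by ext i j; fin_cases i <;> fin_cases j <;>
      simp [Matrix.mul_apply, Fin.sum_univ_four, Matrix.one_apply, Matrix.vecHead, Matrix.vecTail]⟩


/-- `σ1 = ρ0 ρ1 ρ2 ρ3`. -/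
def sigma1 : GL4 := rho0 * rho1 * rho2 * rho3

/-- `σ2 = ρ3 ρ2 ρ1 ρ3`. -/
def sigma2 : GL4 := rho3 * rho2 * rho1 * rho3

/-- `σ3 = ρ2 ρ3`. -/
def sigma3 : GL4 := rho2 * rho3

lemma sigma1_mem : sigma1 ∈ Subgroup.closure ({sigma1, sigma2} : Set GL4) :=
  Subgroup.subset_closure (by simp)

def S1 : Matrix (Fin 4) (Fin 4) ℝ := !![0,0,0,-1; 1,0,0,0; 0,1,0,0; 0,0,1,0]
def S2 : Matrix (Fin 4) (Fin 4) ℝ := !![0,1,0,0; 0,0,0,1; 0,0,1,0; 1,0,0,0]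

lemma comm_scalar (A : Matrix (Fin 4) (Fin 4) ℝ)
    (h1 : A * S1 = S1 * A) (h2 : A * S2 = S2 * A) : A = !![A 0 0,0,0,0; 0,A 0 0,0,0; 0,0,A 0 0,0; 0,0,0,A 0 0] := by
  have E1 : ∀ i j, ∑ k, A i k * S1 k j = ∑ k, S1 i k * A k j := by
    intro i j; rw [← Matrix.mul_apply, ← Matrix.mul_apply, h1]
  have E2 : ∀ i j, ∑ k, A i k * S2 k j = ∑ k, S2 i k * A k j := by
    intro i j; rw [← Matrix.mul_apply, ← Matrix.mul_apply, h2]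
  have h100 := E1 0 0
  have h101 := E1 0 1
  have h102 := E1 0 2
  have h103 := E1 0 3
  have h110 := E1 1 0
  have h111 := E1 1 1
  have h112 := E1 1 2
  have h113 := E1 1 3
  have h120 := E1 2 0
  have h121 := E1 2 1
  have h122 := E1 2 2
  have h123 := E1 2 3
  have h130 := E1 3 0
  have h131 := E1 3 1
  have h132 := E1 3 2
  have h133 := E1 3 3
  have h200 := E2 0 0
  have h201 := E2 0 1
  have h202 := E2 0 2
  have h203 := E2 0 3
  have h210 := E2 1 0
  have h211 := E2 1 1
  have h212 := E2 1 2
  have h213 := E2 1 3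
  have h220 := E2 2 0
  have h221 := E2 2 1
  have h222 := E2 2 2
  have h223 := E2 2 3
  have h230 := E2 3 0
  have h231 := E2 3 1
  have h232 := E2 3 2
  have h233 := E2 3 3
  simp [S1, S2, Fin.sum_univ_four, Matrix.vecHead, Matrix.vecTail]
    at h100 h101 h102 h103 h110 h111 h112 h113 h120 h121 h122 h123 h130 h131 h132 h133 h200 h201 h202 h203 h210 h211 h212 h213 h220 h221 h222 h223 h230 h231 h232 h233
  ext i j
  fin_cases i <;> fin_cases j <;>
    simp [Matrix.vecHead, Matrix.vecTail] <;>
    linarith [h100, h101, h102, h103, h110, h111, h112, h113, h120, h121, h122, h123, h130, h131, h132, h133, h200, h201, h202, h203, h210, h211, h212, h213, h220, h221, h222, h223, h230, h231, h232, h233]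

lemma sigma1_val : ((sigma1 : GL4) : Matrix (Fin 4) (Fin 4) ℝ) = S1 := by
  show ((rho0 * rho1 * rho2 * rho3 : GL4) : Matrix (Fin 4) (Fin 4) ℝ) = S1
  simp only [Units.val_mul]
  show (!![-1,0,0,0; 0,1,0,0; 0,0,1,0; 0,0,0,1] * !![0,1,0,0; 1,0,0,0; 0,0,1,0; 0,0,0,1]
    * !![1,0,0,0; 0,0,1,0; 0,1,0,0; 0,0,0,1] * !![1,0,0,0; 0,1,0,0; 0,0,0,1; 0,0,1,0]
    : Matrix (Fin 4) (Fin 4) ℝ) = S1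
  ext i j
  fin_cases i <;> fin_cases j <;>
    norm_num [S1, Matrix.mul_apply, Fin.sum_univ_four, Matrix.vecHead, Matrix.vecTail, Matrix.cons_val_two, Matrix.cons_val_three]

lemma sigma2_val : ((sigma2 : GL4) : Matrix (Fin 4) (Fin 4) ℝ) = S2 := by
  show ((rho3 * rho2 * rho1 * rho3 : GL4) : Matrix (Fin 4) (Fin 4) ℝ) = S2
  simp only [Units.val_mul]
  show (!![1,0,0,0; 0,1,0,0; 0,0,0,1; 0,0,1,0] * !![1,0,0,0; 0,0,1,0; 0,1,0,0; 0,0,0,1]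
    * !![0,1,0,0; 1,0,0,0; 0,0,1,0; 0,0,0,1] * !![1,0,0,0; 0,1,0,0; 0,0,0,1; 0,0,1,0]
    : Matrix (Fin 4) (Fin 4) ℝ) = S2
  ext i j
  fin_cases i <;> fin_cases j <;>
    norm_num [S2, Matrix.mul_apply, Fin.sum_univ_four, Matrix.vecHead, Matrix.vecTail, Matrix.cons_val_two, Matrix.cons_val_three]

lemma sigma2_mem : sigma2 ∈ Subgroup.closure ({sigma1, sigma2} : Set GL4) :=
  Subgroup.subset_closure (by simp)

lemma sigma1_pow_four : sigma1 ^ 4 = (-1 : GL4) := by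
  apply Units.ext
  show ((sigma1 ^ 4 : GL4) : Matrix (Fin 4) (Fin 4) ℝ) = ((-1 : GL4) : Matrix (Fin 4) (Fin 4) ℝ)
  rw [Units.val_pow_eq_pow_val, sigma1_val, Units.val_neg, Units.val_one]
  have : S1 ^ 4 = S1 * S1 * S1 * S1 := by
    rw [pow_succ, pow_succ, pow_succ, pow_one]
  rw [this]
  ext i j
  fin_cases i <;> fin_cases j <;>
    norm_num [S1, Matrix.mul_apply, Fin.sum_univ_four, Matrix.vecHead, Matrix.vecTail,
      Matrix.one_apply, Fin.ext_iff, Matrix.cons_val_two, Matrix.cons_val_three]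

/-- Matrices all of whose entries are integers. -/
def IntM (M : Matrix (Fin 4) (Fin 4) ℝ) : Prop := ∀ i j, ∃ n : ℤ, M i j = n

lemma IntM.mul {M N : Matrix (Fin 4) (Fin 4) ℝ} (hM : IntM M) (hN : IntM N) :
    IntM (M * N) := by
  intro i j
  obtain ⟨a0, ha0⟩ := hM i 0
  obtain ⟨a1, ha1⟩ := hM i 1
  obtain ⟨a2, ha2⟩ := hM i 2
  obtain ⟨a3, ha3⟩ := hM i 3
  obtain ⟨b0, hb0⟩ := hN 0 j
  obtain ⟨b1, hb1⟩ := hN 1 j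
  obtain ⟨b2, hb2⟩ := hN 2 j
  obtain ⟨b3, hb3⟩ := hN 3 j
  refine ⟨a0*b0 + a1*b1 + a2*b2 + a3*b3, ?_⟩
  rw [Matrix.mul_apply, Fin.sum_univ_four, ha0, ha1, ha2, ha3, hb0, hb1, hb2, hb3]
  push_cast
  ring

/-- The subgroup of `GL4` of elements whose matrix and inverse matrix have
integer entries. -/
def IntGrp : Subgroup GL4 where
  carrier := {g | IntM ((g : GL4) : Matrix (Fin 4) (Fin 4) ℝ) ∧
    IntM ((g⁻¹ : GL4) : Matrix (Fin 4) (Fin 4) ℝ)}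
  one_mem' := by
    constructor <;>
    · intro i j
      refine ⟨if i = j then 1 else 0, ?_⟩
      by_cases h : i = j <;> simp [Matrix.one_apply, h]
  mul_mem' := by
    rintro a b ⟨ha1, ha2⟩ ⟨hb1, hb2⟩
    refine ⟨?_, ?_⟩
    · rw [Units.val_mul]; exact ha1.mul hb1
    · rw [_root_.mul_inv_rev, Units.val_mul]; exact hb2.mul ha2
  inv_mem' := by
    rintro a ⟨ha1, ha2⟩
    exact ⟨ha2, by rw [inv_inv]; exact ha1⟩

lemma intM_S1 : IntM S1 := by
  intro i j
  fin_cases i <;> fin_cases j <;>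
    first
    | (refine ⟨0, ?_⟩; norm_num [S1, Matrix.vecHead, Matrix.vecTail]; done)
    | (refine ⟨1, ?_⟩; norm_num [S1, Matrix.vecHead, Matrix.vecTail]; done)
    | (refine ⟨-1, ?_⟩; norm_num [S1, Matrix.vecHead, Matrix.vecTail]; done)

lemma intM_S2 : IntM S2 := by
  intro i j
  fin_cases i <;> fin_cases j <;>
    first
    | (refine ⟨0, ?_⟩; norm_num [S2, Matrix.vecHead, Matrix.vecTail]; done)
    | (refine ⟨1, ?_⟩; norm_num [S2, Matrix.vecHead, Matrix.vecTail]; done)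
    | (refine ⟨-1, ?_⟩; norm_num [S2, Matrix.vecHead, Matrix.vecTail]; done)

lemma sigma1_inv_val :
    ((sigma1⁻¹ : GL4) : Matrix (Fin 4) (Fin 4) ℝ) = !![0,1,0,0; 0,0,1,0; 0,0,0,1; -1,0,0,0] := by
  rw [Matrix.coe_units_inv, sigma1_val]
  apply Matrix.inv_eq_right_inv
  ext i j
  fin_cases i <;> fin_cases j <;>
    norm_num [S1, Matrix.mul_apply, Fin.sum_univ_four, Matrix.vecHead, Matrix.vecTail,
      Matrix.one_apply, Fin.ext_iff, Matrix.cons_val_two, Matrix.cons_val_three]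

lemma sigma2_inv_val :
    ((sigma2⁻¹ : GL4) : Matrix (Fin 4) (Fin 4) ℝ) = !![0,0,0,1; 1,0,0,0; 0,0,1,0; 0,1,0,0] := by
  rw [Matrix.coe_units_inv, sigma2_val]
  apply Matrix.inv_eq_right_inv
  ext i j
  fin_cases i <;> fin_cases j <;>
    norm_num [S2, Matrix.mul_apply, Fin.sum_univ_four, Matrix.vecHead, Matrix.vecTail,
      Matrix.one_apply, Fin.ext_iff, Matrix.cons_val_two, Matrix.cons_val_three]

lemma gamma_le_int : Subgroup.closure ({sigma1, sigma2} : Set GL4) ≤ IntGrp := by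
  rw [Subgroup.closure_le]
  rintro g (rfl | rfl)
  · refine ⟨by rw [sigma1_val]; exact intM_S1, ?_⟩
    rw [sigma1_inv_val]
    intro i j
    fin_cases i <;> fin_cases j <;>
      first
      | (refine ⟨0, ?_⟩; norm_num [Matrix.vecHead, Matrix.vecTail]; done)
      | (refine ⟨1, ?_⟩; norm_num [Matrix.vecHead, Matrix.vecTail]; done)
      | (refine ⟨-1, ?_⟩; norm_num [Matrix.vecHead, Matrix.vecTail]; done)
  · refine ⟨by rw [sigma2_val]; exact intM_S2, ?_⟩
    rw [sigma2_inv_val]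
    intro i j
    fin_cases i <;> fin_cases j <;>
      first
      | (refine ⟨0, ?_⟩; norm_num [Matrix.vecHead, Matrix.vecTail]; done)
      | (refine ⟨1, ?_⟩; norm_num [Matrix.vecHead, Matrix.vecTail]; done)
      | (refine ⟨-1, ?_⟩; norm_num [Matrix.vecHead, Matrix.vecTail]; done)

/-- The center of `Γ = ⟨σ1, σ2⟩ ≤ GL(4,ℝ)` is the cyclic subgroup generated by
`σ1⁴ = −I`, of order 2. -/
theorem center_of_map_rotation_group :
    sigma1 ^ 4 = (-1 : GL4) ∧
    Subgroup.center ↥(Subgroup.closure ({sigma1, sigma2} : Set GL4)) =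
      Subgroup.zpowers (⟨sigma1 ^ 4, pow_mem sigma1_mem 4⟩ :
        ↥(Subgroup.closure ({sigma1, sigma2} : Set GL4))) ∧
    Nat.card (Subgroup.center ↥(Subgroup.closure ({sigma1, sigma2} : Set GL4))) = 2 := by
  have hs4 : sigma1 ^ 4 = (-1 : GL4) := sigma1_pow_four
  set Γ := Subgroup.closure ({sigma1, sigma2} : Set GL4) with hΓ
  set c : ↥Γ := ⟨sigma1 ^ 4, pow_mem sigma1_mem 4⟩ with hc
  have hcval : ((c : GL4) : Matrix (Fin 4) (Fin 4) ℝ) = -1 := by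
    show ((sigma1 ^ 4 : GL4) : Matrix (Fin 4) (Fin 4) ℝ) = -1
    rw [hs4, Units.val_neg, Units.val_one]
  have hc_center : c ∈ Subgroup.center ↥Γ := by
    rw [Subgroup.mem_center_iff]
    intro g
    apply Subtype.ext
    show (g : GL4) * (c : GL4) = (c : GL4) * (g : GL4)
    show (g : GL4) * (sigma1 ^ 4) = (sigma1 ^ 4) * (g : GL4)
    rw [hs4, mul_neg_one, neg_one_mul]
  have heq : Subgroup.center ↥Γ = Subgroup.zpowers c := by
    apply le_antisymm
    · intro z hz
      rw [Subgroup.mem_center_iff] at hz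
      -- z commutes with sigma1 and sigma2
      have hz1 := hz ⟨sigma1, sigma1_mem⟩
      have hz2 := hz ⟨sigma2, sigma2_mem⟩
      have hm1 : ((z : GL4) : Matrix (Fin 4) (Fin 4) ℝ) * S1 =
          S1 * ((z : GL4) : Matrix (Fin 4) (Fin 4) ℝ) := by
        have h := congrArg (fun w : ↥Γ => ((w : GL4) : Matrix (Fin 4) (Fin 4) ℝ)) hz1
        simp only [Subgroup.coe_mul, Units.val_mul, sigma1_val] at h
        exact h.symm
      have hm2 : ((z : GL4) : Matrix (Fin 4) (Fin 4) ℝ) * S2 =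
          S2 * ((z : GL4) : Matrix (Fin 4) (Fin 4) ℝ) := by
        have h := congrArg (fun w : ↥Γ => ((w : GL4) : Matrix (Fin 4) (Fin 4) ℝ)) hz2
        simp only [Subgroup.coe_mul, Units.val_mul, sigma2_val] at h
        exact h.symm
      set A : Matrix (Fin 4) (Fin 4) ℝ := ((z : GL4) : Matrix (Fin 4) (Fin 4) ℝ) with hA
      have hscalar : A = !![A 0 0,0,0,0; 0,A 0 0,0,0; 0,0,A 0 0,0; 0,0,0,A 0 0] :=
        comm_scalar A hm1 hm2
      -- integrality
      obtain ⟨hint1, hint2⟩ := gamma_le_int z.2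
      obtain ⟨n, hn⟩ := hint1 0 0
      obtain ⟨m, hm⟩ := hint2 0 0
      rw [← hA] at hn
      -- A * (z⁻¹ matrix) = 1, entry (0,0)
      have hprod : A * (((z : GL4)⁻¹ : GL4) : Matrix (Fin 4) (Fin 4) ℝ) = 1 := by
        rw [hA, ← Units.val_mul, mul_inv_cancel, Units.val_one]
      have h00 : A 0 0 * (((z : GL4)⁻¹ : GL4) : Matrix (Fin 4) (Fin 4) ℝ) 0 0 = 1 := by
        have := congrFun (congrFun hprod 0) 0
        rw [Matrix.mul_apply, Fin.sum_univ_four] at this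
        rw [hscalar] at this
        simpa [Matrix.one_apply, Fin.ext_iff] using this
      have hnm : n * m = 1 := by
        have : (n : ℝ) * (m : ℝ) = 1 := by rw [← hn, ← hm]; exact h00
        exact_mod_cast this
      have hn1 : n = 1 ∨ n = -1 := Int.eq_one_or_neg_one_of_mul_eq_one hnm
      rcases hn1 with h | h
      · have hz1' : z = 1 := by
          apply Subtype.ext
          apply Units.ext
          show A = ((1 : GL4) : Matrix (Fin 4) (Fin 4) ℝ)
          rw [Units.val_one, hscalar, hn, h]
          ext i j
          fin_cases i <;> fin_cases j <;> norm_num [Matrix.one_apply, Fin.ext_iff]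
        rw [hz1']
        exact one_mem _
      · have hzc : z = c := by
          apply Subtype.ext
          apply Units.ext
          show A = ((c : GL4) : Matrix (Fin 4) (Fin 4) ℝ)
          rw [hcval, hscalar, hn, h]
          ext i j
          fin_cases i <;> fin_cases j <;> norm_num [Matrix.one_apply, Fin.ext_iff]
        rw [hzc]
        exact Subgroup.mem_zpowers c
    · rw [Subgroup.zpowers_le]
      exact hc_center
  refine ⟨hs4, heq, ?_⟩
  rw [heq, Nat.card_zpowers]
  have hsq : c ^ 2 = 1 := by
    apply Subtype.ext
    show (sigma1 ^ 4) ^ 2 = (1 : GL4)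
    rw [hs4]
    exact neg_one_sq
  have hne : c ≠ 1 := by
    intro h
    have h1 : ((c : GL4) : Matrix (Fin 4) (Fin 4) ℝ) = 1 := by
      rw [h]; rfl
    rw [hcval] at h1
    have := congrFun (congrFun h1 0) 0
    norm_num [Matrix.one_apply, Fin.ext_iff] at this
  exact orderOf_eq_prime hsq hne
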